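/- Let G be a finitely generated group acting by isometries on an ℝ-tree Γ. If every element of G acts as an elliptic isometry, then there is a global fixed point, i.e. a point of Γ fixed by every element of G. -/

import Mathlib

open Set Filter Metric

section Common

variable {H : Type*} [MetricSpace H]

/-- `γ` parametrizes a geodesic from `a` to `b` by arclength on `[0, dist a b]`. -/
def IsGeodesicSegment (γ : ℝ → H) (a b : H) : Prop :=
  γ 0 = a ∧ γ (dist a b) = b ∧
    ∀ s ∈ Set.Icc (0:ℝ) (dist a b), ∀ t ∈ Set.Icc (0:ℝ) (dist a b),
      dist (γ s) (γ t) = |s - t|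

/-- A geodesic space: every pair of points is joined by a geodesic. -/
def GeodesicSpace (H : Type*) [MetricSpace H] : Prop :=
  ∀ a b : H, ∃ γ : ℝ → H, IsGeodesicSegment γ a b

/-- The image of a geodesic segment from `a` to `b`. -/
def segImage (γ : ℝ → H) (a b : H) : Set H :=
  γ '' Set.Icc 0 (dist a b)

/-- A space has `Δ`-thin triangles if each side of every geodesic triangle is contained
in the `Δ`-neighborhood of the union of the other two sides. -/
def ThinTriangles (H : Type*) [MetricSpace H] (Δ : ℝ) : Prop :=
  ∀ a b c : H, ∀ γab γbc γca : ℝ → H,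
    IsGeodesicSegment γab a b → IsGeodesicSegment γbc b c → IsGeodesicSegment γca c a →
      ∀ x ∈ segImage γab a b, ∃ y ∈ segImage γbc b c ∪ segImage γca c a, dist x y ≤ Δ

/-- An arc from `a` to `b`, parametrized (injectively and continuously) by `[0,1]`. -/
def IsArcParam (α : ℝ → H) (a b : H) : Prop :=
  ContinuousOn α (Set.Icc 0 1) ∧ Set.InjOn α (Set.Icc 0 1) ∧ α 0 = a ∧ α 1 = b

/-- An `ℝ`-tree: a metric space in which every pair of points is joined by a geodesic
(so it is a path-metric space and arcs are isometric to intervals of `ℝ`) and in which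
the arc joining two points is unique. -/
def IsRTree (X : Type*) [MetricSpace X] : Prop :=
  (∀ a b : X, ∃ γ : ℝ → X, IsGeodesicSegment γ a b) ∧
  ∀ a b : X, ∀ α β : ℝ → X, IsArcParam α a b → IsArcParam β a b →
    α '' Set.Icc 0 1 = β '' Set.Icc 0 1

/-- The translation length of an isometry. -/
noncomputable def translationLength {X : Type*} [MetricSpace X] (τ : X ≃ᵢ X) : ℝ :=
  ⨅ x : X, dist x (τ x)

/-- The core of an isometry of an `ℝ`-tree: points moved the minimal distance. -/
def isomCore {X : Type*} [MetricSpace X] (τ : X ≃ᵢ X) : Set X :=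
  {x : X | dist x (τ x) = translationLength τ}

/-- An elliptic isometry: one having a fixed point. -/
def IsElliptic {X : Type*} [MetricSpace X] (τ : X ≃ᵢ X) : Prop :=
  ∃ x, τ x = x

/-- A hyperbolic isometry of an `ℝ`-tree: positive translation length, with core
isometric to the real line (its axis). -/
def IsHyperbolicIsom {X : Type*} [MetricSpace X] (τ : X ≃ᵢ X) : Prop :=
  0 < translationLength τ ∧
    ∃ e : ℝ → X, (∀ s t : ℝ, dist (e s) (e t) = |s - t|) ∧ Set.range e = isomCore τ

/-- A metric simplicial tree: an `ℝ`-tree together with a closed discrete set `V` of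
vertices such that each connected component of the complement of `V` is an open edge:
it is the interior of a geodesic segment of positive length with endpoints in `V`. -/
def IsMetricSimplicialTree (X : Type*) [MetricSpace X] : Prop :=
  IsRTree X ∧
    ∃ V : Set X, IsClosed V ∧
      (∀ v ∈ V, ∃ ε > 0, ∀ w ∈ V, dist v w < ε → w = v) ∧
      ∀ x ∈ Vᶜ, ∃ L > (0:ℝ), ∃ f : ℝ → X,
        (∀ s ∈ Set.Icc (0:ℝ) L, ∀ t ∈ Set.Icc (0:ℝ) L, dist (f s) (f t) = |s - t|) ∧
        f '' Set.Ioo 0 L = connectedComponentIn Vᶜ x ∧ f 0 ∈ V ∧ f L ∈ V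

end Common


section Dev
variable {X : Type*} [MetricSpace X]

def MBtw (a m b : X) : Prop := dist a m + dist m b = dist a b

lemma btw_symm {a m b : X} (h : MBtw a m b) : MBtw b m a := by
  unfold MBtw at *
  rw [dist_comm b m, dist_comm m a, dist_comm b a]; linarith

lemma btw_left {a b : X} : MBtw a a b := by simp [MBtw]
lemma btw_right {a b : X} : MBtw a b b := by simp [MBtw]

lemma btw_isometry {a m b : X} (τ : X ≃ᵢ X) (h : MBtw a m b) : MBtw (τ a) (τ m) (τ b) := by
  unfold MBtw at *
  simpa [IsometryEquiv.dist_eq] using h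

namespace IsGeodesicSegment

variable {γ : ℝ → X} {a b : X}

lemma distLeft (h : IsGeodesicSegment γ a b) {t : ℝ} (ht : t ∈ Set.Icc 0 (dist a b)) :
    dist a (γ t) = t := by
  have h0 : (0:ℝ) ∈ Set.Icc 0 (dist a b) := ⟨le_refl _, dist_nonneg⟩
  have := h.2.2 0 h0 t ht
  rw [h.1] at this
  rw [this, abs_of_nonpos (by linarith [ht.1]), neg_sub, sub_zero]

lemma distRight (h : IsGeodesicSegment γ a b) {t : ℝ} (ht : t ∈ Set.Icc 0 (dist a b)) :
    dist (γ t) b = dist a b - t := by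
  have h0 : dist a b ∈ Set.Icc 0 (dist a b) := ⟨dist_nonneg, le_refl _⟩
  have := h.2.2 t ht (dist a b) h0
  rw [h.2.1] at this
  rw [this, abs_of_nonpos (by linarith [ht.2]), neg_sub]

lemma continuousOn (h : IsGeodesicSegment γ a b) :
    ContinuousOn γ (Set.Icc 0 (dist a b)) := by
  refine LipschitzOnWith.continuousOn (K := 1) (LipschitzOnWith.of_dist_le_mul ?_)
  intro x hx y hy
  rw [h.2.2 x hx y hy, NNReal.coe_one, one_mul, Real.dist_eq]

lemma restrict (h : IsGeodesicSegment γ a b) {w : X} (hw : γ (dist a w) = w)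
    (hle : dist a w ≤ dist a b) : IsGeodesicSegment γ a w := by
  refine ⟨h.1, hw, ?_⟩
  intro s hs t ht
  exact h.2.2 s ⟨hs.1, hs.2.trans hle⟩ t ⟨ht.1, ht.2.trans hle⟩

lemma reverse (h : IsGeodesicSegment γ a b) :
    IsGeodesicSegment (fun t => γ (dist a b - t)) b a := by
  refine ⟨by simpa using h.2.1, ?_, ?_⟩
  · rw [dist_comm b a]; simpa using h.1
  intro s hs t ht
  rw [dist_comm b a] at hs ht
  have h1 : dist a b - s ∈ Set.Icc 0 (dist a b) := ⟨by linarith [hs.2], by linarith [hs.1]⟩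
  have h2 : dist a b - t ∈ Set.Icc 0 (dist a b) := ⟨by linarith [ht.2], by linarith [ht.1]⟩
  rw [h.2.2 _ h1 _ h2]
  rw [show dist a b - s - (dist a b - t) = t - s by ring, abs_sub_comm]

lemma shift (h : IsGeodesicSegment γ a b) {t0 : ℝ} (ht0 : t0 ∈ Set.Icc 0 (dist a b)) :
    IsGeodesicSegment (fun t => γ (t0 + t)) (γ t0) b := by
  have hd : dist (γ t0) b = dist a b - t0 := h.distRight ht0
  refine ⟨by simp, ?_, ?_⟩
  · show γ (t0 + dist (γ t0) b) = b
    rw [hd, show t0 + (dist a b - t0) = dist a b by ring, h.2.1]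
  · intro s hs t ht
    rw [hd] at hs ht
    have h1 : t0 + s ∈ Set.Icc 0 (dist a b) := ⟨by linarith [hs.1, ht0.1], by linarith [hs.2]⟩
    have h2 : t0 + t ∈ Set.Icc 0 (dist a b) := ⟨by linarith [ht.1, ht0.1], by linarith [ht.2]⟩
    rw [h.2.2 _ h1 _ h2]
    congr 1; ring

end IsGeodesicSegment

end Dev

section Tree
variable {X : Type*} [MetricSpace X]

lemma arc_concat {γ1 γ2 : ℝ → X} {a m b : X}
    (h1 : IsGeodesicSegment γ1 a m) (h2 : IsGeodesicSegment γ2 m b)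
    (hr : 0 < dist a m) (hs : 0 < dist m b)
    (meet : ∀ u ∈ Set.Icc 0 (dist a m), ∀ v ∈ Set.Icc 0 (dist m b), γ1 u = γ2 v → v = 0) :
    ∃ α : ℝ → X, IsArcParam α a b ∧
      α '' Set.Icc 0 1 = γ1 '' Set.Icc 0 (dist a m) ∪ γ2 '' Set.Icc 0 (dist m b) := by
  classical
  set r := dist a m with hrdef
  set s := dist m b with hsdef
  set u : ℝ → ℝ := fun t => min (max (2 * r * t) 0) r with hu
  set v : ℝ → ℝ := fun t => min (max (2 * s * t - s) 0) s with hv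
  set α : ℝ → X := fun t => if t ≤ (1/2 : ℝ) then γ1 (u t) else γ2 (v t) with hα
  have hurange : ∀ t, u t ∈ Set.Icc 0 r := fun t =>
    ⟨le_min (le_max_right _ _) hr.le, min_le_right _ _⟩
  have hvrange : ∀ t, v t ∈ Set.Icc 0 s := fun t =>
    ⟨le_min (le_max_right _ _) hs.le, min_le_right _ _⟩
  have huval : ∀ t, 0 ≤ t → t ≤ 1/2 → u t = 2 * r * t := by
    intro t ht0 ht1
    have h1' : (0:ℝ) ≤ 2 * r * t := by positivity
    have h2' : 2 * r * t ≤ r := by nlinarith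
    simp [hu, max_eq_left h1', min_eq_left h2']
  have hvval : ∀ t, 1/2 ≤ t → t ≤ 1 → v t = 2 * s * t - s := by
    intro t ht0 ht1
    have h1' : (0:ℝ) ≤ 2 * s * t - s := by nlinarith
    have h2' : 2 * s * t - s ≤ s := by nlinarith
    simp [hv, max_eq_left h1', min_eq_left h2']
  have hu_half : u (1/2) = r := by
    have := huval (1/2) (by norm_num) (le_refl _)
    rw [this]; ring
  have hv_half : v (1/2) = 0 := by
    have := hvval (1/2) (le_refl _) (by norm_num)
    rw [this]; ring
  have hcont1 : Continuous fun t => γ1 (u t) := by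
    rw [← continuousOn_univ]
    refine h1.continuousOn.comp ?_ fun t _ => hurange t
    exact (((continuous_const.mul continuous_id).max continuous_const).min
      continuous_const).continuousOn
  have hcont2 : Continuous fun t => γ2 (v t) := by
    rw [← continuousOn_univ]
    refine h2.continuousOn.comp ?_ fun t _ => hvrange t
    exact ((((continuous_const.mul continuous_id).sub continuous_const).max
      continuous_const).min continuous_const).continuousOn
  have hbdry : ∀ t : ℝ, t = (1/2:ℝ) → γ1 (u t) = γ2 (v t) := by
    rintro t rfl
    rw [hu_half, hv_half, h1.2.1, h2.1]
  have hcont : Continuous α := by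
    rw [hα]
    exact Continuous.if_le hcont1 hcont2 continuous_id continuous_const hbdry
  have hinj : Set.InjOn α (Set.Icc 0 1) := by
    intro t1 ht1 t2 ht2 heq
    rw [hα] at heq
    simp only at heq
    by_cases c1 : t1 ≤ (1/2:ℝ) <;> by_cases c2 : t2 ≤ (1/2:ℝ)
    · rw [if_pos c1, if_pos c2] at heq
      have := h1.2.2 _ (hurange t1) _ (hurange t2)
      rw [heq, dist_self] at this
      have hueq : u t1 = u t2 := by
        have := this.symm; rwa [abs_eq_zero, sub_eq_zero] at this
      rw [huval t1 ht1.1 c1, huval t2 ht2.1 c2] at hueq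
      exact mul_left_cancel₀ (by positivity : (2*r:ℝ) ≠ 0) hueq
    · rw [if_pos c1, if_neg c2] at heq
      have := meet _ (hurange t1) _ (hvrange t2) heq
      rw [hvval t2 (le_of_not_ge c2) ht2.2] at this
      push_neg at c2
      nlinarith
    · rw [if_neg c1, if_pos c2] at heq
      have := meet _ (hurange t2) _ (hvrange t1) heq.symm
      rw [hvval t1 (le_of_not_ge c1) ht1.2] at this
      push_neg at c1
      nlinarith
    · rw [if_neg c1, if_neg c2] at heq
      have := h2.2.2 _ (hvrange t1) _ (hvrange t2)
      rw [heq, dist_self] at this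
      have hveq : v t1 = v t2 := by
        have := this.symm; rwa [abs_eq_zero, sub_eq_zero] at this
      rw [hvval t1 (le_of_not_ge c1) ht1.2, hvval t2 (le_of_not_ge c2) ht2.2] at hveq
      have h2' : 2 * s * t1 = 2 * s * t2 := by linarith
      exact mul_left_cancel₀ (by positivity : (2*s:ℝ) ≠ 0) h2'
  have ha0 : α 0 = a := by
    have hu0 : u 0 = 0 := by
      have := huval 0 (le_refl _) (by norm_num)
      rw [this]; ring
    rw [hα]; simp only [if_pos (by norm_num : (0:ℝ) ≤ 1/2)]
    rw [hu0, h1.1]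
  have ha1 : α 1 = b := by
    have hv1 : v 1 = s := by
      have := hvval 1 (by norm_num) (le_refl _)
      rw [this]; ring
    rw [hα]; simp only [if_neg (by norm_num : ¬ (1:ℝ) ≤ 1/2)]
    rw [hv1, h2.2.1]
  refine ⟨α, ⟨hcont.continuousOn, hinj, ha0, ha1⟩, ?_⟩
  apply Set.Subset.antisymm
  · rintro x ⟨t, ht, rfl⟩
    by_cases c : t ≤ (1/2:ℝ)
    · left
      exact ⟨u t, hurange t, by rw [hα]; simp only [if_pos c]⟩
    · right
      exact ⟨v t, hvrange t, by rw [hα]; simp only [if_neg c]⟩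
  · rintro x (⟨w, hw, rfl⟩ | ⟨w, hw, rfl⟩)
    · refine ⟨w / (2 * r), ⟨div_nonneg hw.1 (by positivity), ?_⟩, ?_⟩
      · rw [div_le_one (by positivity)]
        nlinarith [hw.2]
      · have hc : w / (2 * r) ≤ (1/2:ℝ) := by
          rw [div_le_iff₀ (by positivity)]
          nlinarith [hw.2]
        rw [hα]; simp only [if_pos hc]
        rw [huval _ (div_nonneg hw.1 (by positivity)) hc]
        congr 1
        field_simp
    · rcases eq_or_lt_of_le hw.1 with hw0 | hw0
      · refine ⟨1/2, ⟨by norm_num, by norm_num⟩, ?_⟩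
        rw [hα]; simp only [if_pos (le_refl (1/2:ℝ))]
        rw [hu_half, h1.2.1, ← hw0, h2.1]
      · refine ⟨(w + s) / (2 * s), ⟨div_nonneg (by linarith [hw.1]) (by positivity), ?_⟩, ?_⟩
        · rw [div_le_one (by positivity)]
          nlinarith [hw.2]
        · have hc : ¬ ((w + s) / (2 * s) ≤ (1/2:ℝ)) := by
            rw [not_le, lt_div_iff₀ (by positivity)]
            nlinarith
          rw [hα]; simp only [if_neg hc]
          have hc2 : (1/2:ℝ) ≤ (w + s) / (2 * s) := le_of_lt (by
            rw [lt_div_iff₀ (by positivity)]; nlinarith)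
          have hc3 : (w + s) / (2 * s) ≤ 1 := by
            rw [div_le_one (by positivity)]; nlinarith [hw.2]
          rw [hvval _ hc2 hc3]
          congr 1
          field_simp
          ring

lemma scale_arc {δ : ℝ → X} {a b : X} (h : IsGeodesicSegment δ a b) (hd : 0 < dist a b) :
    IsArcParam (fun t => δ (t * dist a b)) a b ∧
      (fun t => δ (t * dist a b)) '' Set.Icc 0 1 = δ '' Set.Icc 0 (dist a b) := by
  have hmaps : ∀ t ∈ Set.Icc (0:ℝ) 1, t * dist a b ∈ Set.Icc 0 (dist a b) := by
    intro t ht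
    constructor
    · exact mul_nonneg ht.1 hd.le
    · nlinarith [ht.2]
  constructor
  · refine ⟨?_, ?_, ?_, ?_⟩
    · exact h.continuousOn.comp (continuous_id.mul continuous_const).continuousOn hmaps
    · intro t1 ht1 t2 ht2 heq
      have heq' : δ (t1 * dist a b) = δ (t2 * dist a b) := heq
      have := h.2.2 _ (hmaps t1 ht1) _ (hmaps t2 ht2)
      rw [heq', dist_self] at this
      have := this.symm
      rw [abs_eq_zero, sub_eq_zero] at this
      exact mul_right_cancel₀ (ne_of_gt hd) this
    · simp only [zero_mul, h.1]
    · simp only [one_mul, h.2.1]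
  · apply Set.Subset.antisymm
    · rintro x ⟨t, ht, rfl⟩
      exact ⟨t * dist a b, hmaps t ht, rfl⟩
    · rintro x ⟨c, hc, rfl⟩
      refine ⟨c / dist a b, ⟨div_nonneg hc.1 hd.le, by rw [div_le_one hd]; exact hc.2⟩, ?_⟩
      simp only
      congr 1
      field_simp

lemma btw_glue (hX : IsRTree X) {γ1 γ2 : ℝ → X} {a m b : X}
    (h1 : IsGeodesicSegment γ1 a m) (h2 : IsGeodesicSegment γ2 m b)
    (meet : ∀ u ∈ Set.Icc 0 (dist a m), ∀ v ∈ Set.Icc 0 (dist m b), γ1 u = γ2 v → v = 0) :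
    MBtw a m b := by
  rcases eq_or_lt_of_le (dist_nonneg : 0 ≤ dist a m) with hr | hr
  · have : a = m := dist_eq_zero.mp hr.symm
    subst this; exact btw_left
  rcases eq_or_lt_of_le (dist_nonneg : 0 ≤ dist m b) with hs | hs
  · have : m = b := dist_eq_zero.mp hs.symm
    subst this; exact btw_right
  have hab : a ≠ b := by
    intro hab
    have : γ1 0 = γ2 (dist m b) := by rw [h1.1, hab, h2.2.1]
    have := meet 0 ⟨le_refl _, hr.le⟩ (dist m b) ⟨dist_nonneg, le_refl _⟩ this
    exact (ne_of_gt hs) this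
  have habd : 0 < dist a b := dist_pos.mpr hab
  obtain ⟨α, hαarc, hαimg⟩ := arc_concat h1 h2 hr hs meet
  obtain ⟨δ, hδ⟩ := hX.1 a b
  obtain ⟨hβarc, hβimg⟩ := scale_arc hδ habd
  have himg := hX.2 a b α _ hαarc hβarc
  have hm : m ∈ α '' Set.Icc 0 1 := by
    rw [hαimg]
    exact Or.inl ⟨dist a m, ⟨dist_nonneg, le_refl _⟩, h1.2.1⟩
  rw [himg, hβimg] at hm
  obtain ⟨c, hc, hcm⟩ := hm
  have hzm : dist a m = c := by rw [← hcm]; exact hδ.distLeft hc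
  have hmb : dist m b = dist a b - c := by rw [← hcm]; exact hδ.distRight hc
  unfold MBtw
  rw [hzm, hmb]; ring

lemma meet_of_btw {γ1 γ2 : ℝ → X} {a x b : X} (hbtw : MBtw a x b)
    (h1 : IsGeodesicSegment γ1 a x) (h2 : IsGeodesicSegment γ2 x b) :
    ∀ u ∈ Set.Icc 0 (dist a x), ∀ v ∈ Set.Icc 0 (dist x b), γ1 u = γ2 v → v = 0 := by
  intro u hu v hv heq
  have hw1 : dist a (γ1 u) = u := h1.distLeft hu
  have hw3 : dist x (γ2 v) = v := h2.distLeft hv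
  have hw4 : dist (γ2 v) b = dist x b - v := h2.distRight hv
  have hw2 : dist (γ1 u) x = dist a x - u := h1.distRight hu
  have hveq : v = dist a x - u := by
    rw [← hw3, ← heq, dist_comm x (γ1 u), hw2]
  have htri : dist a b ≤ dist a (γ1 u) + dist (γ2 v) b := by
    rw [heq]; exact dist_triangle a (γ2 v) b
  unfold MBtw at hbtw
  rw [hw1, hw4] at htri
  linarith [hu.2]

lemma btw_uniq (hX : IsRTree X) {a x y b : X} (hx : MBtw a x b) (hy : MBtw a y b)
    (hd : dist a x = dist a y) : x = y := by
  by_cases hax : dist a x = 0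
  · have h1 : x = a := by rw [← dist_eq_zero, dist_comm]; exact hax
    have h2 : y = a := by rw [← dist_eq_zero, dist_comm, ← hd]; exact hax
    rw [h1, h2]
  by_cases hxb : dist x b = 0
  · have h1 : x = b := dist_eq_zero.mp hxb
    have hdd : dist a x = dist a b := by unfold MBtw at hx; linarith
    have h2 : y = b := by
      rw [← dist_eq_zero]
      unfold MBtw at hy
      rw [← hd, hdd] at hy
      linarith
    rw [h1, h2]
  have hax' : 0 < dist a x := lt_of_le_of_ne dist_nonneg (Ne.symm hax)
  have hxb' : 0 < dist x b := lt_of_le_of_ne dist_nonneg (Ne.symm hxb)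
  have hay' : 0 < dist a y := hd ▸ hax'
  have hyb' : 0 < dist y b := by
    unfold MBtw at hx hy
    have : dist y b = dist x b := by linarith
    rw [this]; exact hxb'
  obtain ⟨γ1, h1⟩ := hX.1 a x
  obtain ⟨γ2, h2⟩ := hX.1 x b
  obtain ⟨γ1', h1'⟩ := hX.1 a y
  obtain ⟨γ2', h2'⟩ := hX.1 y b
  obtain ⟨αx, hαx, himgx⟩ := arc_concat h1 h2 hax' hxb' (meet_of_btw hx h1 h2)
  obtain ⟨αy, hαy, himgy⟩ := arc_concat h1' h2' hay' hyb' (meet_of_btw hy h1' h2')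
  have himg := hX.2 a b αy αx hαy hαx
  have hymem : y ∈ αy '' Set.Icc 0 1 := by
    rw [himgy]
    exact Or.inl ⟨dist a y, ⟨dist_nonneg, le_refl _⟩, h1'.2.1⟩
  rw [himg, himgx] at hymem
  rcases hymem with ⟨w, hw, hwy⟩ | ⟨w, hw, hwy⟩
  · have e1 : dist a y = w := by rw [← hwy]; exact h1.distLeft hw
    have e2 : dist (γ1 w) x = dist a x - w := h1.distRight hw
    rw [hwy] at e2
    have : dist y x = 0 := by rw [e2, hd, e1]; ring
    exact (dist_eq_zero.mp this).symm
  · have e1 : dist x (γ2 w) = w := h2.distLeft hw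
    have e2 : dist (γ2 w) b = dist x b - w := h2.distRight hw
    rw [hwy] at e1 e2
    unfold MBtw at hx hy
    have hw0 : w = 0 := by linarith [hd]
    rw [hw0] at e1
    exact dist_eq_zero.mp e1

lemma btw_coord (hX : IsRTree X) {a x b : X} {γ : ℝ → X} (hbtw : MBtw a x b)
    (hγ : IsGeodesicSegment γ a b) : γ (dist a x) = x := by
  by_cases hax : dist a x = 0
  · have h1 : a = x := dist_eq_zero.mp hax
    rw [hax, hγ.1, h1]
  by_cases hxb : dist x b = 0
  · have h1 : x = b := dist_eq_zero.mp hxb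
    have hdd : dist a x = dist a b := by unfold MBtw at hbtw; linarith
    rw [hdd, hγ.2.1, h1]
  have hax' : 0 < dist a x := lt_of_le_of_ne dist_nonneg (Ne.symm hax)
  have hxb' : 0 < dist x b := lt_of_le_of_ne dist_nonneg (Ne.symm hxb)
  have habd : 0 < dist a b := by unfold MBtw at hbtw; linarith
  obtain ⟨γ1, h1⟩ := hX.1 a x
  obtain ⟨γ2, h2⟩ := hX.1 x b
  obtain ⟨αx, hαx, himgx⟩ := arc_concat h1 h2 hax' hxb' (meet_of_btw hbtw h1 h2)
  obtain ⟨hβarc, hβimg⟩ := scale_arc hγ habd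
  have himg := hX.2 a b αx _ hαx hβarc
  have hxmem : x ∈ αx '' Set.Icc 0 1 := by
    rw [himgx]
    exact Or.inl ⟨dist a x, ⟨dist_nonneg, le_refl _⟩, h1.2.1⟩
  rw [himg, hβimg] at hxmem
  obtain ⟨c, hc, hcx⟩ := hxmem
  have : dist a x = c := by rw [← hcx]; exact hγ.distLeft hc
  rw [this, hcx]

end Tree

section Tree2
variable {X : Type*} [MetricSpace X]

lemma median_exists (hX : IsRTree X) (a b c : X) :
    ∃ m : X, MBtw a m b ∧ MBtw a m c ∧ MBtw b m c := by
  obtain ⟨γ1, h1⟩ := hX.1 a b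
  obtain ⟨γ2, h2⟩ := hX.1 a c
  set p := dist a b with hp
  set q := dist a c with hq
  set T : Set ℝ := {t | t ∈ Set.Icc 0 (min p q) ∧ γ1 t = γ2 t} with hT
  have hTne : T.Nonempty :=
    ⟨0, ⟨le_refl _, le_min dist_nonneg dist_nonneg⟩, by rw [h1.1, h2.1]⟩
  have hTbdd : BddAbove T := ⟨min p q, fun t ht => ht.1.2⟩
  have hTclosed : IsClosed T := by
    have hTeq : T = Set.Icc 0 (min p q) ∩ (fun t => dist (γ1 t) (γ2 t)) ⁻¹' {0} := by
      ext t
      simp only [hT, Set.mem_setOf_eq, Set.mem_inter_iff, Set.mem_preimage,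
        Set.mem_singleton_iff, dist_eq_zero]
    rw [hTeq]
    have hc1 := h1.continuousOn.mono (Set.Icc_subset_Icc (le_refl (0:ℝ)) (min_le_left p q))
    have hc2 := h2.continuousOn.mono (Set.Icc_subset_Icc (le_refl (0:ℝ)) (min_le_right p q))
    exact ContinuousOn.preimage_isClosed_of_isClosed
      (continuous_dist.comp_continuousOn (hc1.prodMk hc2) :
        ContinuousOn ((fun p : X × X => dist p.1 p.2) ∘ fun t => (γ1 t, γ2 t)) _) isClosed_Icc isClosed_singleton
  have ht0 : sSup T ∈ T := hTclosed.csSup_mem hTne hTbdd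
  set t0 := sSup T with ht0def
  obtain ⟨⟨ht00, ht0m⟩, heq⟩ := ht0
  have ht0p : t0 ∈ Set.Icc 0 p := ⟨ht00, ht0m.trans (min_le_left _ _)⟩
  have ht0q : t0 ∈ Set.Icc 0 q := ⟨ht00, ht0m.trans (min_le_right _ _)⟩
  have hd1 : dist a (γ1 t0) = t0 := h1.distLeft ht0p
  have hd2 : dist (γ1 t0) b = p - t0 := h1.distRight ht0p
  have hd4 : dist (γ1 t0) c = q - t0 := by rw [heq]; exact h2.distRight ht0q
  refine ⟨γ1 t0, ?_, ?_, ?_⟩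
  · unfold MBtw; rw [hd1, hd2]; ring
  · unfold MBtw; rw [hd1, hd4]; ring
  · -- glue
    have hδ1 : IsGeodesicSegment (fun t => γ1 (p - t)) b a := h1.reverse
    have hbm : dist b (γ1 t0) = p - t0 := by rw [dist_comm]; exact hd2
    have hδ1' : IsGeodesicSegment (fun t => γ1 (p - t)) b (γ1 t0) := by
      refine hδ1.restrict ?_ ?_
      · show γ1 (p - dist b (γ1 t0)) = γ1 t0
        rw [hbm]; congr 1; ring
      · rw [hbm, dist_comm b a, ← hp]; linarith
    have hδ2 : IsGeodesicSegment (fun t => γ2 (t0 + t)) (γ2 t0) c := h2.shift ht0q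
    have hδ2' : IsGeodesicSegment (fun t => γ2 (t0 + t)) (γ1 t0) c := by
      rw [heq]; exact hδ2
    refine btw_glue hX hδ1' hδ2' ?_
    intro u hu v hv huv
    rw [hbm] at hu
    rw [hd4] at hv
    have hs1p : p - u ∈ Set.Icc 0 p := ⟨by linarith [hu.2], by linarith [hu.1]⟩
    have hs2q : t0 + v ∈ Set.Icc 0 q := ⟨by linarith [hv.1], by linarith [hv.2]⟩
    have hw1 : dist a (γ1 (p - u)) = p - u := h1.distLeft hs1p
    have hw2 : dist a (γ2 (t0 + v)) = t0 + v := h2.distLeft hs2q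
    have huv' : γ1 (p - u) = γ2 (t0 + v) := huv
    have hseq : p - u = t0 + v := by rw [← hw1, huv', hw2]
    have hmem : p - u ∈ T := by
      refine ⟨⟨by linarith [hu.2], le_min (by linarith [hu.1]) ?_⟩, ?_⟩
      · rw [hseq]; linarith [hv.2]
      · rw [huv', hseq]
    have : p - u ≤ t0 := le_csSup hTbdd hmem
    linarith [hv.1]

def MConvex (C : Set X) : Prop := ∀ x ∈ C, ∀ y ∈ C, ∀ m : X, MBtw x m y → m ∈ C

lemma proj_exists (hX : IsRTree X) {F : Set X} (hne : F.Nonempty) (hcl : IsClosed F)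
    (hconv : MConvex F) (z : X) : ∃ p ∈ F, ∀ f ∈ F, MBtw z p f := by
  obtain ⟨f0, hf0⟩ := hne
  obtain ⟨γ, hγ⟩ := hX.1 z f0
  set d := dist z f0 with hd
  set T : Set ℝ := {t | t ∈ Set.Icc 0 d ∧ γ t ∈ F} with hT
  have hTne : T.Nonempty := ⟨d, ⟨dist_nonneg, le_refl _⟩, by rw [hγ.2.1]; exact hf0⟩
  have hTbdd : BddBelow T := ⟨0, fun t ht => ht.1.1⟩
  have hTclosed : IsClosed T := by
    have hTeq : T = Set.Icc 0 d ∩ γ ⁻¹' F := by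
      ext t; simp only [hT, Set.mem_setOf_eq, Set.mem_inter_iff, Set.mem_preimage]
    rw [hTeq]
    exact ContinuousOn.preimage_isClosed_of_isClosed hγ.continuousOn isClosed_Icc hcl
  have ht0 : sInf T ∈ T := hTclosed.csInf_mem hTne hTbdd
  set t0 := sInf T with ht0def
  obtain ⟨ht0d, hpF⟩ := ht0
  refine ⟨γ t0, hpF, ?_⟩
  intro f hf
  obtain ⟨m, hm1, hm2, hm3⟩ := median_exists hX z f0 f
  have hmF : m ∈ F := hconv f0 hf0 f hf m hm3
  have hcm : γ (dist z m) = m := btw_coord hX hm1 hγ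
  have hsle : dist z m ≤ d := by unfold MBtw at hm1; rw [hd]; linarith [dist_nonneg (x := m) (y := f0)]
  have hsmem : dist z m ∈ T := ⟨⟨dist_nonneg, hsle⟩, by rw [hcm]; exact hmF⟩
  have ht0le : t0 ≤ dist z m := csInf_le hTbdd hsmem
  have hzp : dist z (γ t0) = t0 := hγ.distLeft ht0d
  have hpm : dist (γ t0) m = dist z m - t0 := by
    conv_lhs => rw [← hcm]
    rw [hγ.2.2 t0 ht0d (dist z m) ⟨dist_nonneg, hsle⟩, abs_of_nonpos (by linarith), neg_sub]
  refine le_antisymm ?_ ?_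
  · calc dist z (γ t0) + dist (γ t0) f
        ≤ dist z (γ t0) + (dist (γ t0) m + dist m f) := by
          have := dist_triangle (γ t0) m f; linarith
      _ = dist z m + dist m f := by rw [hzp, hpm]; ring
      _ = dist z f := hm2
  · exact dist_triangle z (γ t0) f

lemma fix_closed (τ : X ≃ᵢ X) : IsClosed {x : X | τ x = x} :=
  isClosed_eq τ.continuous continuous_id

lemma fix_convex (hX : IsRTree X) (τ : X ≃ᵢ X) : MConvex {x : X | τ x = x} := by
  intro x hx y hy m hm
  have hx' : τ x = x := hx
  have hy' : τ y = y := hy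
  have h1 : MBtw x (τ m) y := by
    have := btw_isometry τ hm
    rwa [hx', hy'] at this
  have h2 : dist x m = dist x (τ m) := by
    conv_rhs => rw [← hx']
    rw [IsometryEquiv.dist_eq]
  exact (btw_uniq hX hm h1 h2).symm

lemma refl_btw (hX : IsRTree X) (τ : X ≃ᵢ X) {z m : X} (hm : τ m = m)
    (P : ∀ b : X, τ b = b → MBtw z m b) : MBtw z m (τ z) ∧ dist m (τ z) = dist z m := by
  have hmz : dist m (τ z) = dist z m := by
    conv_lhs => rw [← hm]
    rw [IsometryEquiv.dist_eq, dist_comm]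
  refine ⟨?_, hmz⟩
  obtain ⟨c, H1, H2, H3⟩ := median_exists hX z (τ z) m
  have hsymm_m : τ.symm m = m := by
    conv_lhs => rw [← hm]
    exact τ.symm_apply_apply m
  have H3' : MBtw z (τ.symm c) m := by
    have := btw_isometry τ.symm H3
    rwa [τ.symm_apply_apply, hsymm_m] at this
  have hdc : dist z (τ.symm c) = dist z c := by
    have e1 : dist z (τ.symm c) = dist (τ z) c := by
      rw [← IsometryEquiv.dist_eq τ, τ.apply_symm_apply]
    have e2 : dist (τ z) m = dist z m := by rw [dist_comm (τ z) m, hmz]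
    unfold MBtw at H2 H3
    rw [e1]
    linarith
  have hc : τ.symm c = c := btw_uniq hX H3' H2 hdc
  have hfix : τ c = c := by
    conv_lhs => rw [← hc]
    exact τ.apply_symm_apply c
  have hPc : MBtw z m c := P c hfix
  have hcm0 : dist c m = 0 := by
    unfold MBtw at H2 hPc
    have := dist_comm c m
    linarith
  have hcmeq : c = m := dist_eq_zero.mp hcm0
  rwa [hcmeq] at H1

lemma serre (hX : IsRTree X) (g h : X ≃ᵢ X) (hg : ∃ x, g x = x) (hh : ∃ x, h x = x)
    {z : X} (hz : g (h z) = z) : ∃ x, g x = x ∧ h x = x := by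
  obtain ⟨ag, hag⟩ := hg
  obtain ⟨ah, hah⟩ := hh
  obtain ⟨m, hmB, Pm⟩ := proj_exists hX (F := {x : X | h x = x}) ⟨ah, hah⟩
    (fix_closed h) (fix_convex hX h) z
  obtain ⟨n, hnA, Pn⟩ := proj_exists hX (F := {x : X | g x = x}) ⟨ag, hag⟩
    (fix_closed g) (fix_convex hX g) z
  have hm : h m = m := hmB
  have hn : g n = n := hnA
  obtain ⟨Hm, hmhz⟩ := refl_btw hX h hm (fun b hb => Pm b hb)
  obtain ⟨Hn, hngz⟩ := refl_btw hX g hn (fun b hb => Pn b hb)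
  have e1 : dist z (h z) = 2 * dist z m := by unfold MBtw at Hm; linarith
  have e2 : dist z (g z) = 2 * dist z n := by unfold MBtw at Hn; linarith
  have e3 : dist z (h z) = dist z (g z) := by
    have hh' : h z = g.symm z := by
      have := congrArg g.symm hz
      rwa [g.symm_apply_apply] at this
    rw [hh', ← IsometryEquiv.dist_eq g, g.apply_symm_apply, dist_comm]
  have e4 : dist z m = dist z n := by linarith
  have Hgm : MBtw z (g m) (g z) := by
    have := btw_isometry g Hm
    rw [hz] at this
    exact btw_symm this
  have e5 : dist z (g m) = dist z n := by
    have hgmz : dist (g m) (g z) = dist z m := by rw [IsometryEquiv.dist_eq, dist_comm]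
    unfold MBtw at Hgm
    linarith
  have e6 : g m = n := btw_uniq hX Hgm Hn e5
  have e7 : m = n := by
    have := congrArg g.symm e6
    rw [g.symm_apply_apply] at this
    rw [this]
    conv_lhs => rw [← hn]
    exact g.symm_apply_apply n
  refine ⟨m, ?_, hm⟩
  rw [e7]; exact hn

lemma helly3 (hX : IsRTree X) {C1 C2 C3 : Set X}
    (h1 : MConvex C1) (h2 : MConvex C2) (h3 : MConvex C3)
    (h12 : (C1 ∩ C2).Nonempty) (h23 : (C2 ∩ C3).Nonempty) (h13 : (C1 ∩ C3).Nonempty) :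
    (C1 ∩ C2 ∩ C3).Nonempty := by
  obtain ⟨x, hx1, hx2⟩ := h12
  obtain ⟨y, hy2, hy3⟩ := h23
  obtain ⟨w, hw1, hw3⟩ := h13
  obtain ⟨m, hm1, hm2, hm3⟩ := median_exists hX x y w
  exact ⟨m, ⟨h1 x hx1 w hw1 m hm2, h2 x hx2 y hy2 m hm1⟩, h3 y hy3 w hw3 m hm3⟩

lemma helly (hX : IsRTree X) [Nonempty X] {ι : Type*} [DecidableEq ι] (S : Finset ι) :
    ∀ C : ι → Set X, (∀ i ∈ S, MConvex (C i)) →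
      (∀ i ∈ S, ∀ j ∈ S, (C i ∩ C j).Nonempty) → ∃ x : X, ∀ i ∈ S, x ∈ C i := by
  induction S using Finset.induction_on with
  | empty =>
    intro C _ _
    exact ⟨Classical.arbitrary X, fun i hi => absurd hi (Finset.notMem_empty i)⟩
  | @insert a s ha IH =>
    intro C hconv hpair
    have hamem : a ∈ insert a s := Finset.mem_insert_self a s
    have hCa : (C a).Nonempty := by
      obtain ⟨x, hx, _⟩ := hpair a hamem a hamem
      exact ⟨x, hx⟩
    rcases s.eq_empty_or_nonempty with rfl | hs
    · obtain ⟨x, hx⟩ := hCa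
      refine ⟨x, fun i hi => ?_⟩
      rcases Finset.mem_insert.mp hi with rfl | hi'
      · exact hx
      · exact absurd hi' (Finset.notMem_empty i)
    · have hconv' : ∀ i ∈ s, MConvex (C i ∩ C a) := by
        intro i hi x hx y hy m hm
        exact ⟨hconv i (Finset.mem_insert_of_mem hi) x hx.1 y hy.1 m hm,
          hconv a hamem x hx.2 y hy.2 m hm⟩
      have hpair' : ∀ i ∈ s, ∀ j ∈ s, ((C i ∩ C a) ∩ (C j ∩ C a)).Nonempty := by
        intro i hi j hj
        have h3 := helly3 hX (hconv i (Finset.mem_insert_of_mem hi))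
          (hconv j (Finset.mem_insert_of_mem hj)) (hconv a hamem)
          (hpair i (Finset.mem_insert_of_mem hi) j (Finset.mem_insert_of_mem hj))
          (hpair j (Finset.mem_insert_of_mem hj) a hamem)
          (hpair i (Finset.mem_insert_of_mem hi) a hamem)
        obtain ⟨x, ⟨hxi, hxj⟩, hxa⟩ := h3
        exact ⟨x, ⟨hxi, hxa⟩, ⟨hxj, hxa⟩⟩
      obtain ⟨x, hx⟩ := IH (fun i => C i ∩ C a) hconv' hpair'
      refine ⟨x, fun i hi => ?_⟩
      rcases Finset.mem_insert.mp hi with rfl | hi'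
      · obtain ⟨j, hj⟩ := hs
        exact (hx j hj).2
      · exact (hx i hi').1

end Tree2

/-- If a finitely generated group acts by isometries on an `ℝ`-tree
and every element acts as an elliptic isometry, then there is a global fixed point. -/
theorem global_fixed_point_of_all_elliptic {G : Type*} [Group G] (hG : Group.FG G)
    {X : Type*} [MetricSpace X] [Nonempty X] (hX : IsRTree X)
    (σ : G →* (X ≃ᵢ X)) (hell : ∀ g : G, IsElliptic (σ g)) :
    ∃ x : X, ∀ g : G, σ g x = x := by
  classical
  obtain ⟨Sset, hgen, hfin⟩ := Group.fg_iff.mp hG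
  set S : Finset G := hfin.toFinset with hSdef
  set C : G → Set X := fun s => {x : X | σ s x = x} with hC
  have hconv : ∀ i ∈ S, MConvex (C i) := fun i _ => fix_convex hX (σ i)
  have hpair : ∀ i ∈ S, ∀ j ∈ S, (C i ∩ C j).Nonempty := by
    intro i _ j _
    obtain ⟨z, hz⟩ := hell (i * j)
    have hz' : (σ i) ((σ j) z) = z := by
      rw [← IsometryEquiv.mul_apply, ← map_mul]; exact hz
    obtain ⟨x, hx1, hx2⟩ := serre hX (σ i) (σ j) (hell i) (hell j) hz'
    exact ⟨x, hx1, hx2⟩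
  obtain ⟨x, hx⟩ := helly hX S C hconv hpair
  refine ⟨x, fun g => ?_⟩
  have hg : g ∈ Subgroup.closure Sset := by rw [hgen]; exact Subgroup.mem_top g
  refine Subgroup.closure_induction (p := fun g _ => σ g x = x) ?_ ?_ ?_ ?_ hg
  · intro s hs
    exact hx s (hfin.mem_toFinset.mpr hs)
  · show (σ (1:G)) x = x
    rw [map_one]; rfl
  · intro u v _ _ hpu hpv
    show (σ (u*v)) x = x
    rw [map_mul, IsometryEquiv.mul_apply, hpv, hpu]
  · intro u _ hpu
    show (σ u⁻¹) x = x
    have h1 : (σ u⁻¹) ((σ u) x) = (σ u⁻¹) x := congrArg _ hpu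
    rw [← IsometryEquiv.mul_apply, ← map_mul, inv_mul_cancel, map_one] at h1
    exact h1.symm
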